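/- Let (X,d) be a complete metric space, and for each i ∈ ℕ let 𝓕_i = {f_{1,i},…,f_{n,i}} be a family of n Lipschitz maps on X. Let 𝓕 = {f_1,…,f_n} with each f_r Lipschitz and L = max_r Lip(f_r) < 1. Assume there is a compact set C ⊆ X with f_{r,i}(C) ⊆ C for all r, i, and that for each r the sequence {f_{r,i}}_{i∈ℕ} converges uniformly on C to f_r as i → ∞. Then for every nonempty compact A ⊆ C the forward SFS trajectories Φ_k(A) = F_k ∘ F_{k−1} ∘ ⋯ ∘ F_1(A) converge in the Hausdorff metric to the unique attractor of 𝓕, i.e. to the unique nonempty compact set A_𝓕 with ⋃_{r=1}^n f_r(A_𝓕) = A_𝓕, where F_i is the Hutchinson operator of 𝓕_i. -/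

import Mathlib

open Filter Topology TopologicalSpace

/-- The forward trajectory maps `Φ_k = F_k ∘ F_{k-1} ∘ ⋯ ∘ F₁` (with `0`-based indexing). -/
def forwardTraj {α : Type*} (T : ℕ → α → α) : ℕ → α → α
  | 0 => id
  | k + 1 => T k ∘ forwardTraj T k

open EMetric Metric Set ENNReal in
private lemma lip_haus_aux {X : Type*} [MetricSpace X] {g : X → X} {L : NNReal}
    (hg : LipschitzWith L g) {s t : Set X} (htc : IsCompact t) (htn : t.Nonempty) :
    ∀ x ∈ g '' s, infEdist x (g '' t) ≤ L * hausdorffEdist s t := by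
  rintro _ ⟨a, ha, rfl⟩
  obtain ⟨b, hbt, hb⟩ := htc.exists_infEdist_eq_edist htn a
  calc infEdist (g a) (g '' t) ≤ edist (g a) (g b) :=
        infEdist_le_edist_of_mem (mem_image_of_mem _ hbt)
    _ ≤ L * edist a b := hg.edist_le_mul _ _
    _ = L * infEdist a t := by
      have h' := congrArg (fun y => (L : ℝ≥0∞) * y) hb; exact h'.symm
    _ ≤ L * hausdorffEdist s t := mul_le_mul_right (infEdist_le_hausdorffEdist_of_mem ha) _

open EMetric Metric Set ENNReal in
private lemma lip_haus {X : Type*} [MetricSpace X] {g : X → X} {L : NNReal}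
    (hg : LipschitzWith L g) {s t : Set X} (hsc : IsCompact s) (hsn : s.Nonempty)
    (htc : IsCompact t) (htn : t.Nonempty) :
    hausdorffEdist (g '' s) (g '' t) ≤ L * hausdorffEdist s t := by
  refine hausdorffEdist_le_of_infEdist (lip_haus_aux hg htc htn) fun x hx => ?_
  have := lip_haus_aux hg hsc hsn x hx
  have h2 : hausdorffEDist t s = hausdorffEDist s t := hausdorffEdist_comm
  exact le_of_le_of_eq this (congrArg (fun y => (L : ℝ≥0∞) * y) h2)

open EMetric Metric Set ENNReal in
private lemma haus_iUnion_le {X : Type*} [MetricSpace X] {ι : Type*} {s t : ι → Set X}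
    {r : ℝ≥0∞} (h : ∀ i, hausdorffEdist (s i) (t i) ≤ r) :
    hausdorffEdist (⋃ i, s i) (⋃ i, t i) ≤ r := by
  refine hausdorffEdist_le_of_infEdist (fun x hx => ?_) (fun x hx => ?_)
  · obtain ⟨i, hi⟩ := Set.mem_iUnion.1 hx
    exact le_trans (le_trans (infEdist_anti (Set.subset_iUnion t i))
      (infEdist_le_hausdorffEdist_of_mem hi)) (h i)
  · obtain ⟨i, hi⟩ := Set.mem_iUnion.1 hx
    refine le_trans (le_trans (infEdist_anti (Set.subset_iUnion s i))
      (infEdist_le_hausdorffEdist_of_mem hi)) ?_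
    rw [hausdorffEdist_comm]; exact h i

open EMetric Metric Set ENNReal in
private lemma haus_close {X : Type*} [MetricSpace X] {g g' : X → X} {B : Set X} {r : ℝ≥0∞}
    (h : ∀ x ∈ B, edist (g x) (g' x) ≤ r) :
    hausdorffEdist (g '' B) (g' '' B) ≤ r := by
  apply hausdorffEdist_le_of_mem_edist
  · rintro _ ⟨a, ha, rfl⟩
    exact ⟨g' a, Set.mem_image_of_mem _ ha, h a ha⟩
  · rintro _ ⟨a, ha, rfl⟩
    exact ⟨g a, Set.mem_image_of_mem _ ha, by rw [edist_comm]; exact h a ha⟩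

private lemma tendsto_zero_of_contract (a : ℕ → ℝ) (L : ℝ) (hL0 : 0 ≤ L) (hL1 : L < 1)
    (ha : ∀ k, 0 ≤ a k)
    (h : ∀ δ : ℝ, 0 < δ → ∀ᶠ k in Filter.atTop, a (k + 1) ≤ L * a k + δ) :
    Filter.Tendsto a Filter.atTop (𝓝 0) := by
  rw [Metric.tendsto_atTop]
  intro ε hε
  have h1L : 0 < 1 - L := by linarith
  have hδpos : 0 < ε * (1 - L) / 4 := by positivity
  set δ := ε * (1 - L) / 4 with hδdef
  obtain ⟨N, hN⟩ := Filter.eventually_atTop.1 (h δ hδpos)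
  have hdiv : δ / (1 - L) = ε / 4 := by
    rw [hδdef]; field_simp
  have hq : 0 ≤ δ / (1 - L) := div_nonneg hδpos.le h1L.le
  have hbound : ∀ m, a (N + m) ≤ L ^ m * a N + δ / (1 - L) := by
    intro m
    induction m with
    | zero =>
      simp only [Nat.add_zero, pow_zero, one_mul]
      linarith
    | succ m ih =>
      have step : a (N + m + 1) ≤ L * a (N + m) + δ := hN (N + m) (Nat.le_add_right _ _)
      have hmul : L * a (N + m) ≤ L * (L ^ m * a N + δ / (1 - L)) :=
        mul_le_mul_of_nonneg_left ih hL0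
      have heq : L * (δ / (1 - L)) + δ = δ / (1 - L) := by
        field_simp; ring
      have h3 : a (N + (m + 1)) ≤ L * (L ^ m * a N + δ / (1 - L)) + δ := by
        have : N + (m + 1) = N + m + 1 := rfl
        rw [this]; linarith
      calc a (N + (m + 1)) ≤ L * (L ^ m * a N + δ / (1 - L)) + δ := h3
        _ = L ^ (m + 1) * a N + (L * (δ / (1 - L)) + δ) := by ring
        _ = L ^ (m + 1) * a N + δ / (1 - L) := by rw [heq]
  have hpow : Filter.Tendsto (fun m => L ^ m * a N) Filter.atTop (𝓝 0) := by
    simpa using (tendsto_pow_atTop_nhds_zero_of_lt_one hL0 hL1).mul_const (a N)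
  obtain ⟨M, hM⟩ := Filter.eventually_atTop.1 (hpow.eventually_lt_const hδpos)
  refine ⟨N + M, fun k hk => ?_⟩
  have hm : M ≤ k - N := by omega
  have hkeq : N + (k - N) = k := by omega
  have h1 : a k ≤ L ^ (k - N) * a N + δ / (1 - L) := by
    have := hbound (k - N); rwa [hkeq] at this
  have h2 : L ^ (k - N) * a N < δ := hM _ hm
  rw [Real.dist_eq, sub_zero, abs_of_nonneg (ha k)]
  nlinarith [mul_nonneg hε.le hL0]

/-- (Corollary `SFSforward`, convergence of forward SFS trajectories): for a sequence of
function systems `𝓕ᵢ = {f_{1,i},…,f_{n,i}}` of Lipschitz maps with a compact invariant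
set `C`, converging uniformly on `C` to a contractive system `𝓕 = {f₁,…,fₙ}` with
contraction factor `L < 1`, the forward SFS trajectories converge from any nonempty
compact initial set `A ⊆ C` to the unique attractor of `𝓕`. -/
theorem forward_SFS_trajectories_converge_to_attractor
    {X : Type*} [MetricSpace X] [CompleteSpace X] [Nonempty X]
    {n : ℕ} (hn : 0 < n)
    (f : ℕ → Fin n → X → X)
    (hf : ∀ i r, ∃ K : NNReal, LipschitzWith K (f i r))
    (flim : Fin n → X → X) (L : NNReal) (hL : L < 1)
    (hflim : ∀ r, LipschitzWith L (flim r))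
    (C : Set X) (hCc : IsCompact C)
    (hinv : ∀ i r, Set.MapsTo (f i r) C C)
    (hu : ∀ r, TendstoUniformlyOn (fun i x => f i r x) (flim r) atTop C)
    (F : ℕ → NonemptyCompacts X → NonemptyCompacts X)
    (hF : ∀ i (B : NonemptyCompacts X), (F i B : Set X) = ⋃ r, f i r '' (B : Set X)) :
    ∃ Afix : NonemptyCompacts X,
      (⋃ r, flim r '' (Afix : Set X)) = (Afix : Set X) ∧
      (∀ B : NonemptyCompacts X, (⋃ r, flim r '' (B : Set X)) = (B : Set X) → B = Afix) ∧
      ∀ A : NonemptyCompacts X, (A : Set X) ⊆ C →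
        Tendsto (fun k => forwardTraj F k A) atTop (𝓝 Afix) := by
  haveI : Nonempty (Fin n) := ⟨⟨0, hn⟩⟩
  set r0 : Fin n := ⟨0, hn⟩ with hr0
  -- the limit Hutchinson operator
  set Flim : NonemptyCompacts X → NonemptyCompacts X := fun B =>
    ⟨⟨⋃ r, flim r '' (B : Set X),
      isCompact_iUnion fun r => B.isCompact.image (hflim r).continuous⟩,
      Set.Nonempty.mono (Set.subset_iUnion (fun r => flim r '' (B : Set X)) r0)
        (B.nonempty.image _)⟩ with hFlimdef
  have hcar : ∀ B : NonemptyCompacts X, (Flim B : Set X) = ⋃ r, flim r '' (B : Set X) :=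
    fun B => rfl
  have hLip : LipschitzWith L Flim := by
    intro B B'
    show EMetric.hausdorffEdist (Flim B : Set X) (Flim B' : Set X)
      ≤ L * EMetric.hausdorffEdist (B : Set X) (B' : Set X)
    rw [hcar, hcar]
    exact haus_iUnion_le fun r =>
      lip_haus (hflim r) B.isCompact B.nonempty B'.isCompact B'.nonempty
  have hContr : ContractingWith L Flim := ⟨hL, hLip⟩
  haveI : Nonempty (NonemptyCompacts X) :=
    ⟨⟨⟨{Classical.arbitrary X}, isCompact_singleton⟩, Set.singleton_nonempty _⟩⟩
  set Afix := ContractingWith.fixedPoint Flim hContr with hAfixdef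
  have hfix : Flim Afix = Afix := hContr.fixedPoint_isFixedPt
  refine ⟨Afix, ?_, ?_, ?_⟩
  · exact congrArg (fun B : NonemptyCompacts X => (B : Set X)) hfix
  · intro B hB
    have : Flim B = B := NonemptyCompacts.ext hB
    exact hContr.fixedPoint_unique this
  · intro A hA
    have hinvC : ∀ k, ((forwardTraj F k A : NonemptyCompacts X) : Set X) ⊆ C := by
      intro k
      induction k with
      | zero => exact hA
      | succ k ih =>
        have hstep : forwardTraj F (k + 1) A = F k (forwardTraj F k A) := rfl
        rw [hstep, hF]
        exact Set.iUnion_subset fun r =>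
          Set.image_subset_iff.2 fun x hx => hinv k r (ih hx)
    have hLR : (L : ℝ) < 1 := by exact_mod_cast hL
    have key : ∀ δ : ℝ, 0 < δ → ∀ᶠ k in atTop,
        dist (forwardTraj F (k + 1) A) Afix ≤ L * dist (forwardTraj F k A) Afix + δ := by
      intro δ hδ
      have hev : ∀ᶠ i in atTop, ∀ r, ∀ x ∈ C, dist (flim r x) (f i r x) < δ :=
        eventually_all.2 fun r => (Metric.tendstoUniformlyOn_iff.1 (hu r)) δ hδ
      filter_upwards [hev] with k hk
      set Bk := forwardTraj F k A with hBk
      have hstep : forwardTraj F (k + 1) A = F k Bk := rfl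
      have hclose : dist (F k Bk) (Flim Bk) ≤ δ := by
        rw [← edist_le_ofReal hδ.le]
        show EMetric.hausdorffEdist (F k Bk : Set X) (Flim Bk : Set X) ≤ ENNReal.ofReal δ
        rw [hF, hcar]
        refine haus_iUnion_le fun r => haus_close fun x hx => ?_
        exact (edist_le_ofReal hδ.le).2
          (by rw [dist_comm]; exact (hk r x (hinvC k hx)).le)
      have h1 : dist (Flim Bk) Afix ≤ L * dist Bk Afix := by
        conv_lhs => rw [← hfix]
        exact hLip.dist_le_mul _ _
      have h2 := dist_triangle (F k Bk) (Flim Bk) Afix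
      rw [hstep]
      linarith
    have hmain : Tendsto (fun k => dist (forwardTraj F k A) Afix) atTop (𝓝 0) :=
      tendsto_zero_of_contract _ (L : ℝ) L.coe_nonneg hLR (fun k => dist_nonneg) key
    exact tendsto_iff_dist_tendsto_zero.2 hmain
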